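/- Let G be a self-similar group with finite generating set S acting faithfully on X* for a finite alphabet X, and suppose there exist g ∈ G of infinite order and a nonempty v ∈ X* with g|_v = g and g(v) = v. Then the self-similarity graph Σ(G) (vertices X*, horizontal edges {u, s(u)} for s ∈ S, vertical edges {u, xu} for x ∈ X) admits no increasing unbounded divergence function; in particular, Σ(G) is not Gromov hyperbolic. -/

import Mathlib

namespace Stmt19

/-- A self-similar action of a group `G` on the words over the alphabet `X`,
with restriction maps satisfying `(gh)|_v = g|_{h(v)} · h|_v`,
`g(uv) = g(u) · g|_u(v)` and `g|_{uv} = (g|_u)|_v`. -/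
structure SelfSimilarAction (G X : Type*) [Group G] where
  /-- the action of a group element on words -/
  act : G → List X → List X
  /-- the restriction of a group element at a word -/
  res : G → List X → G
  act_one : ∀ v, act 1 v = v
  act_mul : ∀ g h v, act (g * h) v = act g (act h v)
  res_mul : ∀ g h v, res (g * h) v = res g (act h v) * res h v
  act_append : ∀ g u v, act g (u ++ v) = act g u ++ act (res g u) v
  res_append : ∀ g u v, res g (u ++ v) = res (res g u) v

/-- The `k`-fold concatenation `v^k` of the word `v`. -/
def wordPow {X : Type*} (v : List X) (k : ℕ) : List X := (List.replicate k v).flatten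

/-- The self-similarity graph of a self-similar group with generating set `S`:
vertices are the words over `X`, with horizontal edges `{u, s(u)}` for `s ∈ S` and
vertical edges `{u, xu}` for `x ∈ X`. -/
def ssGraph {G X : Type*} [Group G] (A : SelfSimilarAction G X) (S : Finset G) :
    SimpleGraph (List X) where
  Adj u w := u ≠ w ∧
    ((∃ s ∈ S, u = A.act s w ∨ w = A.act s u) ∨ ∃ x : X, u = x :: w ∨ w = x :: u)
  symm := by
    constructor
    rintro u w ⟨hne, (⟨s, hs, h | h⟩ | ⟨x, h | h⟩)⟩
    · exact ⟨hne.symm, Or.inl ⟨s, hs, Or.inr h⟩⟩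
    · exact ⟨hne.symm, Or.inl ⟨s, hs, Or.inl h⟩⟩
    · exact ⟨hne.symm, Or.inr ⟨x, Or.inr h⟩⟩
    · exact ⟨hne.symm, Or.inr ⟨x, Or.inl h⟩⟩
  loopless := ⟨fun u h => h.1 rfl⟩

/-- `e : ℕ → ℝ` is a divergence function for the graph `Γ`: whenever two geodesics
`α, β` issue from a common vertex `y`, have length greater than `R + r`, and satisfy
`dist (α R) (β R) > e 0`, every path from `α (R+r)` to `β (R+r)` staying outside the
open ball of radius `R + r` about `y` has length at least `e r`. -/
def IsDivergenceFunction {V : Type*} (Γ : SimpleGraph V) (e : ℕ → ℝ) : Prop :=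
  ∀ (y pa pb : V) (R r : ℕ) (α : Γ.Walk y pa) (β : Γ.Walk y pb),
    α.length = Γ.dist y pa → β.length = Γ.dist y pb →
    R + r < α.length → R + r < β.length →
    e 0 < (Γ.dist (α.getVert R) (β.getVert R) : ℝ) →
    ∀ p : Γ.Walk (α.getVert (R + r)) (β.getVert (R + r)),
      (∀ z ∈ p.support, R + r ≤ Γ.dist y z) →
      e r ≤ (p.length : ℝ)

/-- Gromov hyperbolicity of a graph, via the four-point condition for the
combinatorial distance. -/
def IsGromovHyperbolic {V : Type*} (Γ : SimpleGraph V) : Prop :=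
  ∃ δ : ℝ, 0 ≤ δ ∧ ∀ x y z w : V,
    (Γ.dist x y : ℝ) + (Γ.dist z w : ℝ) ≤
      max ((Γ.dist x z : ℝ) + (Γ.dist y w : ℝ))
        ((Γ.dist x w : ℝ) + (Γ.dist y z : ℝ)) + δ


/-! ### Auxiliary machinery -/

section GraphGeneric

variable {V : Type*} {Γ : SimpleGraph V}

lemma exists_take {a b : V} (p : Γ.Walk a b) (t : ℕ) (ht : t ≤ p.length) :
    ∃ q : Γ.Walk a (p.getVert t), q.length = t ∧ ∀ z ∈ q.support, z ∈ p.support := by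
  induction p generalizing t with
  | nil =>
    simp only [SimpleGraph.Walk.length_nil, Nat.le_zero] at ht
    subst ht
    exact ⟨SimpleGraph.Walk.nil.copy rfl rfl, rfl, by simp⟩
  | @cons u w b h q ih =>
    cases t with
    | zero =>
      exact ⟨SimpleGraph.Walk.nil.copy rfl rfl, rfl, by
        intro z hz; have hz' : z = u := List.mem_singleton.mp hz
        subst hz'; exact SimpleGraph.Walk.start_mem_support _⟩
    | succ t =>
      simp only [SimpleGraph.Walk.length_cons, Nat.add_le_add_iff_right] at ht
      obtain ⟨q', hq'len, hq'supp⟩ := ih t ht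
      refine ⟨SimpleGraph.Walk.cons h q', by simp [hq'len], ?_⟩
      intro z hz
      change z ∈ u :: q'.support at hz
      rw [List.mem_cons] at hz
      rcases hz with rfl | hz
      · simp
      · rw [SimpleGraph.Walk.support_cons, List.mem_cons]
        exact Or.inr (hq'supp z hz)

lemma exists_drop {a b : V} (p : Γ.Walk a b) (t : ℕ) (ht : t ≤ p.length) :
    ∃ q : Γ.Walk (p.getVert t) b, q.length = p.length - t ∧
      (∀ i, q.getVert i = p.getVert (t + i)) ∧ ∀ z ∈ q.support, z ∈ p.support := by
  induction p generalizing t with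
  | nil =>
    simp only [SimpleGraph.Walk.length_nil, Nat.le_zero] at ht
    subst ht
    exact ⟨SimpleGraph.Walk.nil.copy rfl rfl, rfl, fun i => rfl, by simp⟩
  | @cons u w b h q ih =>
    cases t with
    | zero =>
      refine ⟨(SimpleGraph.Walk.cons h q).copy rfl rfl, rfl, fun i => by
        rw [Nat.zero_add]; rfl, by intro z hz; exact hz⟩
    | succ t =>
      simp only [SimpleGraph.Walk.length_cons, Nat.add_le_add_iff_right] at ht
      obtain ⟨q', hq'len, hq'gv, hq'supp⟩ := ih t ht
      refine ⟨q', by simp [hq'len], fun i => by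
        exact (hq'gv i).trans (by rw [show t + 1 + i = (t + i) + 1 by omega]; rfl), ?_⟩
      intro z hz
      rw [SimpleGraph.Walk.support_cons, List.mem_cons]
      exact Or.inr (hq'supp z hz)

lemma dist_triangle_of_walks {y m b : V} (q1 : Γ.Walk y m) (q2 : Γ.Walk m b) :
    Γ.dist y b ≤ Γ.dist y m + Γ.dist m b := by
  obtain ⟨w1, hw1⟩ := q1.reachable.exists_walk_length_eq_dist
  obtain ⟨w2, hw2⟩ := q2.reachable.exists_walk_length_eq_dist
  have := SimpleGraph.dist_le (w1.append w2)
  rwa [SimpleGraph.Walk.length_append, hw1, hw2] at this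

lemma geodesic_getVert {y b : V} (p : Γ.Walk y b) (hp : p.length = Γ.dist y b)
    (t : ℕ) (ht : t ≤ p.length) :
    Γ.dist y (p.getVert t) = t ∧ Γ.dist (p.getVert t) b = p.length - t := by
  obtain ⟨q1, hq1, -⟩ := exists_take p t ht
  obtain ⟨q2, hq2, -, -⟩ := exists_drop p t ht
  have d1 : Γ.dist y (p.getVert t) ≤ t := by
    have := SimpleGraph.dist_le q1; omega
  have d2 : Γ.dist (p.getVert t) b ≤ p.length - t := by
    have := SimpleGraph.dist_le q2; omega
  have d3 := dist_triangle_of_walks q1 q2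
  omega

lemma geodesic_getVert2 {y b : V} (p : Γ.Walk y b) (hp : p.length = Γ.dist y b)
    (s t : ℕ) (hst : s ≤ t) (ht : t ≤ p.length) :
    Γ.dist (p.getVert s) (p.getVert t) = t - s := by
  obtain ⟨q, hqlen, hqgv, -⟩ := exists_drop p s (le_trans hst ht)
  have hgeo : q.length = Γ.dist (p.getVert s) b := by
    rw [hqlen, (geodesic_getVert p hp s (le_trans hst ht)).2]
  have := (geodesic_getVert q hgeo (t - s) (by omega)).1
  rw [hqgv (t - s)] at this
  have hts : s + (t - s) = t := by omega
  rw [hts] at this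
  omega

/-- The Gromov product. -/
noncomputable def gp (Γ : SimpleGraph V) (y a b : V) : ℝ :=
  ((Γ.dist y a : ℝ) + (Γ.dist y b : ℝ) - (Γ.dist a b : ℝ)) / 2

lemma gp_comm (y a b : V) : gp Γ y a b = gp Γ y b a := by
  unfold gp
  rw [show Γ.dist a b = Γ.dist b a from SimpleGraph.dist_comm]
  ring

lemma gp_four {δ : ℝ}
    (H : ∀ x y z w : V, (Γ.dist x y : ℝ) + (Γ.dist z w : ℝ) ≤
      max ((Γ.dist x z : ℝ) + (Γ.dist y w : ℝ)) ((Γ.dist x w : ℝ) + (Γ.dist y z : ℝ)) + δ)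
    (w x z u : V) : min (gp Γ w x u) (gp Γ w u z) - δ / 2 ≤ gp Γ w x z := by
  have h := H x z u w
  have c1 : (Γ.dist x w : ℝ) = (Γ.dist w x : ℝ) := by rw [SimpleGraph.dist_comm]
  have c2 : (Γ.dist z w : ℝ) = (Γ.dist w z : ℝ) := by rw [SimpleGraph.dist_comm]
  have c3 : (Γ.dist u w : ℝ) = (Γ.dist w u : ℝ) := by rw [SimpleGraph.dist_comm]
  have c4 : (Γ.dist z u : ℝ) = (Γ.dist u z : ℝ) := by rw [SimpleGraph.dist_comm]
  unfold gp
  rcases max_cases ((Γ.dist x u : ℝ) + (Γ.dist z w : ℝ)) ((Γ.dist x w : ℝ) + (Γ.dist z u : ℝ))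
    with ⟨hm, -⟩ | ⟨hm, -⟩ <;> rw [hm] at h
  · have := min_le_left (gp Γ w x u) (gp Γ w u z)
    unfold gp at this
    linarith
  · have := min_le_right (gp Γ w x u) (gp Γ w u z)
    unfold gp at this
    linarith

lemma gp_chain {δ' : ℝ} (hδ' : 0 ≤ δ')
    (H : ∀ w x z u : V, min (gp Γ w x u) (gp Γ w u z) - δ' ≤ gp Γ w x z)
    (y : V) (M : ℕ) :
    ∀ N : ℕ, 1 ≤ N → ∀ (a b : V) (p : Γ.Walk a b), p.length = N →
      (∀ z ∈ p.support, (M : ℝ) ≤ (Γ.dist y z : ℝ)) →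
      (M : ℝ) - 1/2 - δ' * (Nat.clog 2 N : ℝ) ≤ gp Γ y a b := by
  intro N
  induction N using Nat.strong_induction_on with
  | _ N ih =>
    intro hN a b p hplen hsupp
    rcases eq_or_lt_of_le hN with h1 | h2
    · have hd : (Γ.dist a b : ℝ) ≤ 1 := by
        have := SimpleGraph.dist_le p
        rw [hplen, ← h1] at this
        exact_mod_cast this
      have hya : (M : ℝ) ≤ (Γ.dist y a : ℝ) := hsupp a p.start_mem_support
      have hyb : (M : ℝ) ≤ (Γ.dist y b : ℝ) := hsupp b p.end_mem_support
      have : (Nat.clog 2 1 : ℝ) = 0 := by norm_num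
      rw [← h1, this]
      unfold gp
      linarith
    · have hN2 : 2 ≤ N := h2
      set k := N / 2 with hk
      have hk1 : 1 ≤ k := by omega
      have hkN : k < N := by omega
      have hkle : k ≤ p.length := by omega
      obtain ⟨q1, hq1len, hq1supp⟩ := exists_take p k hkle
      obtain ⟨q2, hq2len, -, hq2supp⟩ := exists_drop p k hkle
      have hNk : p.length - k = N - k := by omega
      have hceil : N - k = (N + 1) / 2 := by omega
      have hclog : Nat.clog 2 ((N + 1) / 2) + 1 = Nat.clog 2 N := by
        rw [Nat.clog_of_two_le (by norm_num) hN2]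
        congr 2
      have hlogk : Nat.clog 2 k + 1 ≤ Nat.clog 2 N := by
        rw [← hclog]
        have : k ≤ (N + 1) / 2 := by omega
        exact Nat.add_le_add_right (Nat.clog_mono_right 2 this) 1
      have hlogNk : Nat.clog 2 (N - k) + 1 ≤ Nat.clog 2 N := by
        rw [← hclog, hceil]
      have ih1 := ih k hkN hk1 a (p.getVert k) q1 hq1len
        (fun z hz => hsupp z (hq1supp z hz))
      have ih2 := ih (N - k) (by omega) (by omega) (p.getVert k) b q2 (by omega)
        (fun z hz => hsupp z (hq2supp z hz))
      have hH := H y a b (p.getVert k)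
      have e1 : (Nat.clog 2 k : ℝ) ≤ (Nat.clog 2 N : ℝ) - 1 := by
        have h' : ((Nat.clog 2 k + 1 : ℕ) : ℝ) ≤ ((Nat.clog 2 N : ℕ) : ℝ) := Nat.cast_le.mpr hlogk
        push_cast at h'; linarith
      have e2 : (Nat.clog 2 (N - k) : ℝ) ≤ (Nat.clog 2 N : ℝ) - 1 := by
        have h' : ((Nat.clog 2 (N - k) + 1 : ℕ) : ℝ) ≤ ((Nat.clog 2 N : ℕ) : ℝ) :=
          Nat.cast_le.mpr hlogNk
        push_cast at h'; linarith
      have hmin : min (gp Γ y a (p.getVert k)) (gp Γ y (p.getVert k) b) ≥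
          (M : ℝ) - 1/2 - δ' * ((Nat.clog 2 N : ℝ) - 1) := by
        apply le_min
        · calc (M : ℝ) - 1/2 - δ' * ((Nat.clog 2 N : ℝ) - 1)
            ≤ (M : ℝ) - 1/2 - δ' * (Nat.clog 2 k : ℝ) := by nlinarith
          _ ≤ _ := ih1
        · calc (M : ℝ) - 1/2 - δ' * ((Nat.clog 2 N : ℝ) - 1)
            ≤ (M : ℝ) - 1/2 - δ' * (Nat.clog 2 (N - k) : ℝ) := by nlinarith
          _ ≤ _ := ih2
      calc (M : ℝ) - 1/2 - δ' * (Nat.clog 2 N : ℝ)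
          = ((M : ℝ) - 1/2 - δ' * ((Nat.clog 2 N : ℝ) - 1)) - δ' := by ring
        _ ≤ min (gp Γ y a (p.getVert k)) (gp Γ y (p.getVert k) b) - δ' := by linarith
        _ ≤ gp Γ y a b := hH

end GraphGeneric

lemma exists_nat_pow_bound (A B : ℕ) : ∃ m : ℕ, 1 ≤ m ∧ A + B * m ≤ 2 ^ m := by
  refine ⟨2 * (A + 2 * B + 2), by omega, ?_⟩
  set t := A + 2 * B + 2 with ht
  have h1 : t + 1 ≤ 2 ^ t := Nat.lt_two_pow_self (n := t)
  have h2 : 2 ^ (2 * t) = 2 ^ t * 2 ^ t := by rw [two_mul, pow_add]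
  have h3 : (t + 1) * (t + 1) ≤ 2 ^ t * 2 ^ t := Nat.mul_le_mul h1 h1
  have h4 : A + B * (2 * t) ≤ (t + 1) * (t + 1) := by nlinarith
  omega

lemma final_step {δ δ' : ℝ} (hδ : 0 ≤ δ) (hδ'def : δ' = δ / 2) (m0 r ℓ : ℕ)
    (hkey : (r : ℝ) + (2 * (δ + 1) * (m0 : ℝ)) / 2 < δ' * (Nat.clog 2 ℓ : ℝ)) :
    (2 : ℝ) ^ (m0 + ⌊(r : ℝ) / (δ + 1)⌋₊) + (r : ℝ) / ((r : ℝ) + 1) ≤ (ℓ : ℝ) := by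
  have hδ1 : (0:ℝ) < δ + 1 := by linarith
  have hδ'0 : 0 ≤ δ' := by rw [hδ'def]; positivity
  have hδ'pos : 0 < δ' := by
    rcases lt_or_ge 0 δ' with h | h
    · exact h
    · exfalso
      have hc0 : (0 : ℝ) ≤ (Nat.clog 2 ℓ : ℝ) := by positivity
      have h5 : δ' * (Nat.clog 2 ℓ : ℝ) ≤ 0 := mul_nonpos_of_nonpos_of_nonneg h hc0
      have hr0 : (0 : ℝ) ≤ (r : ℝ) := by positivity
      have hm0 : (0 : ℝ) ≤ (m0 : ℝ) := by positivity
      nlinarith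
  have hNbound : δ' * ((m0 + ⌊(r : ℝ) / (δ + 1)⌋₊ : ℕ) : ℝ) ≤
      (r : ℝ) + (2 * (δ + 1) * (m0 : ℝ)) / 2 := by
    have f1 : δ' * (m0 : ℝ) ≤ (2 * (δ + 1) * (m0 : ℝ)) / 2 := by
      rw [hδ'def]
      have : (0 : ℝ) ≤ (m0 : ℝ) := by positivity
      nlinarith
    have hdivnn : (0:ℝ) ≤ (r : ℝ) / (δ + 1) := div_nonneg (Nat.cast_nonneg r) hδ1.le
    have f2 : δ' * ((⌊(r : ℝ) / (δ + 1)⌋₊ : ℕ) : ℝ) ≤ (r : ℝ) := by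
      have g1 : ((⌊(r : ℝ) / (δ + 1)⌋₊ : ℕ) : ℝ) ≤ (r : ℝ) / (δ + 1) :=
        Nat.floor_le hdivnn
      have g2 : δ' * ((r : ℝ) / (δ + 1)) ≤ (δ + 1) * ((r : ℝ) / (δ + 1)) :=
        mul_le_mul_of_nonneg_right (by rw [hδ'def]; linarith) hdivnn
      have g3 : (δ + 1) * ((r : ℝ) / (δ + 1)) = (r : ℝ) :=
        mul_div_cancel₀ (r : ℝ) (ne_of_gt hδ1)
      have g4 := mul_le_mul_of_nonneg_left g1 hδ'0
      linarith
    push_cast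
    rw [mul_add]
    linarith [f1, f2]
  have hNclog : m0 + ⌊(r : ℝ) / (δ + 1)⌋₊ < Nat.clog 2 ℓ := by
    have hlt : δ' * ((m0 + ⌊(r : ℝ) / (δ + 1)⌋₊ : ℕ) : ℝ) <
        δ' * (Nat.clog 2 ℓ : ℝ) := by linarith
    have h6 := (mul_lt_mul_iff_right₀ hδ'pos).mp hlt
    exact_mod_cast h6
  have hpow : 2 ^ (m0 + ⌊(r : ℝ) / (δ + 1)⌋₊) < ℓ :=
    (Nat.lt_clog_iff_pow_lt (by norm_num)).mp hNclog
  have hfinal : ((2 ^ (m0 + ⌊(r : ℝ) / (δ + 1)⌋₊) : ℕ) : ℝ) + 1 ≤ (ℓ : ℝ) := by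
    have h9 : 2 ^ (m0 + ⌊(r : ℝ) / (δ + 1)⌋₊) + 1 ≤ ℓ := hpow
    exact_mod_cast h9
  have hfr1 : (0:ℝ) ≤ (r : ℝ) / ((r : ℝ) + 1) := by positivity
  have hfr2 : (r : ℝ) / ((r : ℝ) + 1) < 1 := by
    rw [div_lt_one (by positivity)]; linarith
  push_cast at hfinal
  linarith

section Hyper
variable {V : Type*} {Γ : SimpleGraph V}

theorem divergence_of_hyperbolic (h : IsGromovHyperbolic Γ) :
    ∃ e : ℕ → ℝ, StrictMono e ∧ (∀ C : ℝ, ∃ n : ℕ, C < e n) ∧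
      IsDivergenceFunction Γ e := by
  obtain ⟨δ, hδ, H4⟩ := h
  obtain ⟨δ', hδ'def⟩ : ∃ x : ℝ, x = δ / 2 := ⟨δ / 2, rfl⟩
  have hδ'0 : 0 ≤ δ' := by rw [hδ'def]; positivity
  have Hgp : ∀ w x z u : V, min (gp Γ w x u) (gp Γ w u z) - δ' ≤ gp Γ w x z := by
    rw [hδ'def]
    exact fun w x z u => gp_four H4 w x z u
  -- choose m0
  obtain ⟨m0, hm01, hm0⟩ := exists_nat_pow_bound (⌈2 * δ + 1⌉₊) (⌈2 * (δ + 1)⌉₊)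
  have hm0R : 2 * δ + 1 + 2 * (δ + 1) * (m0 : ℝ) ≤ (2 : ℝ) ^ m0 := by
    have c1 : (2 * δ + 1 : ℝ) ≤ (⌈2 * δ + 1⌉₊ : ℝ) := Nat.le_ceil _
    have c2 : (2 * (δ + 1) : ℝ) ≤ (⌈2 * (δ + 1)⌉₊ : ℝ) := Nat.le_ceil _
    have c3 : ((⌈2 * δ + 1⌉₊ + ⌈2 * (δ + 1)⌉₊ * m0 : ℕ) : ℝ) ≤ ((2 ^ m0 : ℕ) : ℝ) :=
      Nat.cast_le.mpr hm0
    push_cast at c3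
    have c4 : 2 * (δ + 1) * (m0 : ℝ) ≤ (⌈2 * (δ + 1)⌉₊ : ℝ) * m0 := by
      apply mul_le_mul_of_nonneg_right c2 (by positivity)
    linarith
  have hδ1 : (0 : ℝ) < δ + 1 := by linarith
  -- the divergence function
  obtain ⟨e, he⟩ : ∃ e : ℕ → ℝ,
      e = fun r : ℕ => (2 : ℝ) ^ (m0 + ⌊(r : ℝ) / (δ + 1)⌋₊) + (r : ℝ) / ((r : ℝ) + 1) :=
    ⟨_, rfl⟩
  have he0 : e 0 = (2 : ℝ) ^ m0 := by
    rw [he]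
    norm_num
  have hfrac : ∀ r : ℕ, 0 ≤ (r : ℝ) / ((r : ℝ) + 1) ∧ (r : ℝ) / ((r : ℝ) + 1) < 1 := by
    intro r
    constructor
    · positivity
    · rw [div_lt_one (by positivity)]; linarith
  refine ⟨e, ?_, ?_, ?_⟩
  · -- strict mono
    intro r r' hrr
    have h1 : (2 : ℝ) ^ (m0 + ⌊(r : ℝ) / (δ + 1)⌋₊) ≤ (2 : ℝ) ^ (m0 + ⌊(r' : ℝ) / (δ + 1)⌋₊) := by
      apply pow_le_pow_right₀ (by norm_num)
      have : (r : ℝ) / (δ + 1) ≤ (r' : ℝ) / (δ + 1) := by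
        have hc : (r : ℝ) ≤ (r' : ℝ) := by exact_mod_cast hrr.le
        gcongr
      exact Nat.add_le_add_left (Nat.floor_le_floor this) m0
    have h2 : (r : ℝ) / ((r : ℝ) + 1) < (r' : ℝ) / ((r' : ℝ) + 1) := by
      rw [div_lt_div_iff₀ (by positivity) (by positivity)]
      have : (r : ℝ) < (r' : ℝ) := by exact_mod_cast hrr
      nlinarith
    rw [he]
    simp only []
    linarith
  · -- unbounded
    intro C
    obtain ⟨NC, hNC⟩ := exists_nat_ge C
    refine ⟨⌈(δ + 1) * (NC + 1)⌉₊, ?_⟩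
    set n := ⌈(δ + 1) * (NC + 1)⌉₊ with hn
    have h1 : (δ + 1) * (NC + 1) ≤ (n : ℝ) := Nat.le_ceil _
    have h2 : ((NC : ℝ) + 1) ≤ (n : ℝ) / (δ + 1) := by
      rw [le_div_iff₀ hδ1]; linarith [Nat.le_ceil ((δ + 1) * (NC + 1))]
    have h3 : NC + 1 ≤ ⌊(n : ℝ) / (δ + 1)⌋₊ := by
      apply Nat.le_floor
      push_cast
      linarith
    have h4 : (2 : ℝ) ^ (m0 + ⌊(n : ℝ) / (δ + 1)⌋₊) ≥ (m0 + ⌊(n : ℝ) / (δ + 1)⌋₊ : ℕ) + 1 := by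
      have := Nat.lt_two_pow_self (n := m0 + ⌊(n : ℝ) / (δ + 1)⌋₊)
      have hc : ((m0 + ⌊(n : ℝ) / (δ + 1)⌋₊ + 1 : ℕ) : ℝ) ≤ ((2 ^ (m0 + ⌊(n : ℝ) / (δ + 1)⌋₊) : ℕ) : ℝ) :=
        Nat.cast_le.mpr this
      push_cast at hc
      push_cast
      linarith
    have h5 : (NC : ℝ) + 2 ≤ ((m0 + ⌊(n : ℝ) / (δ + 1)⌋₊ : ℕ) : ℝ) + 1 := by
      have : NC + 1 ≤ m0 + ⌊(n : ℝ) / (δ + 1)⌋₊ := le_trans h3 (Nat.le_add_left _ _)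
      push_cast
      have h6 := (Nat.cast_le (α := ℝ)).mpr this
      push_cast at h6
      linarith
    have h7 := (hfrac n).1
    rw [he]
    push_cast at h4 h5 ⊢
    linarith
  · -- divergence function
    intro y pa pb R r α β hαg hβg hRa hRb hsep p hsupp
    have hEpos : (0:ℝ) < 2 * (δ + 1) * (m0 : ℝ) := by
      have : (1 : ℝ) ≤ (m0 : ℝ) := by exact_mod_cast hm01
      nlinarith
    have dyP : Γ.dist y (α.getVert R) = R := (geodesic_getVert α hαg R (by omega)).1
    have dyQ : Γ.dist y (β.getVert R) = R := (geodesic_getVert β hβg R (by omega)).1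
    have dya : Γ.dist y (α.getVert (R + r)) = R + r :=
      (geodesic_getVert α hαg (R + r) (by omega)).1
    have dyb : Γ.dist y (β.getVert (R + r)) = R + r :=
      (geodesic_getVert β hβg (R + r) (by omega)).1
    have dPa : Γ.dist (α.getVert R) (α.getVert (R + r)) = r := by
      have h := geodesic_getVert2 α hαg R (R + r) (by omega) (by omega)
      rw [show R + r - R = r by omega] at h
      exact h
    have dQb : Γ.dist (β.getVert R) (β.getVert (R + r)) = r := by
      have h := geodesic_getVert2 β hβg R (R + r) (by omega) (by omega)
      rw [show R + r - R = r by omega] at h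
      exact h
    have gpPa : gp Γ y (α.getVert R) (α.getVert (R + r)) = (R : ℝ) := by
      unfold gp; rw [dyP, dya, dPa]; push_cast; ring
    have gpQb : gp Γ y (β.getVert (R + r)) (β.getVert R) = (R : ℝ) := by
      rw [gp_comm]; unfold gp; rw [dyQ, dyb, dQb]; push_cast; ring
    have gpPQval : gp Γ y (α.getVert R) (β.getVert R) =
        ((R : ℝ) + (R : ℝ) - (Γ.dist (α.getVert R) (β.getVert R) : ℝ)) / 2 := by
      unfold gp; rw [dyP, dyQ]
    have hsep' : (2 * δ + 1 + 2 * (δ + 1) * (m0 : ℝ) : ℝ) <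
        (Γ.dist (α.getVert R) (β.getVert R) : ℝ) := by
      rw [he0] at hsep
      linarith
    -- Step B : gp y a b < R - 1/2 - E/2
    have hab : gp Γ y (α.getVert (R + r)) (β.getVert (R + r)) <
        (R : ℝ) - 1/2 - (2 * (δ + 1) * (m0 : ℝ)) / 2 := by
      by_contra hcon
      push_neg at hcon
      have hx1 := Hgp y (α.getVert R) (β.getVert R) (α.getVert (R + r))
      have hx2 := Hgp y (α.getVert (R + r)) (β.getVert R) (β.getVert (R + r))
      rw [gpPa] at hx1
      rw [gpQb] at hx2
      have h1 : (R : ℝ) - 1/2 - (2 * (δ + 1) * (m0 : ℝ)) / 2 ≤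
          min (gp Γ y (α.getVert (R + r)) (β.getVert (R + r))) (R : ℝ) :=
        le_min hcon (by linarith)
      have h2 : (R : ℝ) - 1/2 - (2 * (δ + 1) * (m0 : ℝ)) / 2 - δ' ≤
          gp Γ y (α.getVert (R + r)) (β.getVert R) := by linarith
      have h3 : (R : ℝ) - 1/2 - (2 * (δ + 1) * (m0 : ℝ)) / 2 - δ' ≤
          min (R : ℝ) (gp Γ y (α.getVert (R + r)) (β.getVert R)) :=
        le_min (by linarith) h2
      have h4 : (R : ℝ) - 1/2 - (2 * (δ + 1) * (m0 : ℝ)) / 2 - 2 * δ' ≤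
          gp Γ y (α.getVert R) (β.getVert R) := by linarith
      rw [gpPQval] at h4
      rw [hδ'def] at h4
      linarith
    -- Step C : the path is nonempty
    have hl1 : 1 ≤ p.length := by
      by_contra h0
      push_neg at h0
      have h00 : p.length = 0 := by omega
      have haeq : α.getVert (R + r) = β.getVert (R + r) :=
        SimpleGraph.Walk.eq_of_length_eq_zero h00
      rw [← haeq] at hab
      have hgg : gp Γ y (α.getVert (R + r)) (α.getVert (R + r)) = (R : ℝ) + (r : ℝ) := by
        unfold gp
        rw [dya, SimpleGraph.dist_self]
        push_cast; ring
      rw [hgg] at hab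
      have : (0 : ℝ) ≤ (r : ℝ) := by positivity
      linarith
    -- Step D : chain lemma
    have hchain := gp_chain hδ'0 Hgp y (R + r) p.length hl1 _ _ p rfl
      (fun z hz => by exact_mod_cast hsupp z hz)
    -- Step E
    have hkey : (r : ℝ) + (2 * (δ + 1) * (m0 : ℝ)) / 2 < δ' * (Nat.clog 2 p.length : ℝ) := by
      push_cast at hchain
      linarith
    rw [he]
    exact final_step hδ hδ'def m0 r p.length hkey


end Hyper

section SelfSim
set_option linter.unusedSectionVars false

variable {G X : Type*} [Group G] (A : SelfSimilarAction G X)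

lemma act_inv_act (g : G) (u : List X) : A.act g⁻¹ (A.act g u) = u := by
  rw [← A.act_mul, inv_mul_cancel, A.act_one]

lemma act_act_inv (g : G) (u : List X) : A.act g (A.act g⁻¹ u) = u := by
  rw [← A.act_mul, mul_inv_cancel, A.act_one]

lemma act_injective (g : G) : Function.Injective (A.act g) := by
  intro a b h
  have := congrArg (A.act g⁻¹) h
  rwa [act_inv_act, act_inv_act] at this

lemma act_nil (g : G) : A.act g [] = [] := by
  have h := A.act_append g [] (A.act g⁻¹ [])
  simp only [List.nil_append] at h
  rw [act_act_inv] at h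
  exact (List.append_eq_nil_iff.mp h.symm).1

lemma length_le_length_act : ∀ (u : List X) (g : G), u.length ≤ (A.act g u).length := by
  intro u
  induction u with
  | nil => intro g; simp
  | cons x t ih =>
    intro g
    have h : A.act g (x :: t) = A.act g [x] ++ A.act (A.res g [x]) t := by
      simpa using A.act_append g [x] t
    have h1 : A.act g [x] ≠ [] := by
      intro hh
      have := congrArg (A.act g⁻¹) hh
      rw [act_inv_act, act_nil] at this
      exact List.cons_ne_nil x [] this
    have h2 : 1 ≤ (A.act g [x]).length := by
      cases hq : A.act g [x] with
      | nil => exact absurd hq h1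
      | cons a b => simp
    rw [h, List.length_append]
    calc (x :: t).length = 1 + t.length := by simp [Nat.add_comm]
    _ ≤ (A.act g [x]).length + (A.act (A.res g [x]) t).length :=
      Nat.add_le_add h2 (ih _)

lemma length_act (g : G) (u : List X) : (A.act g u).length = u.length := by
  refine le_antisymm ?_ (length_le_length_act A u g)
  have := length_le_length_act A (A.act g u) g⁻¹
  rwa [act_inv_act] at this


section wp
lemma wordPow_zero (v : List X) : wordPow v 0 = [] := rfl
lemma wordPow_succ (v : List X) (k : ℕ) : wordPow v (k+1) = v ++ wordPow v k := by
  simp [wordPow, List.replicate_succ]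
lemma wordPow_length (v : List X) (k : ℕ) : (wordPow v k).length = k * v.length := by
  induction k with
  | zero => simp [wordPow_zero]
  | succ k ih => simp [wordPow_succ, ih]; ring
end wp

variable {g : G} {v : List X} (h1 : A.res g v = g) (h2 : A.act g v = v)

include h1 h2 in
lemma act_wordPow_append (k : ℕ) (w : List X) :
    A.act g (wordPow v k ++ w) = wordPow v k ++ A.act g w := by
  induction k with
  | zero => simp [wordPow_zero]
  | succ k ih =>
    rw [wordPow_succ, List.append_assoc, A.act_append, h1, h2, ih, List.append_assoc]

include h1 h2 in
lemma act_pow_wordPow_append (n k : ℕ) (w : List X) :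
    A.act (g ^ n) (wordPow v k ++ w) = wordPow v k ++ A.act (g ^ n) w := by
  induction n with
  | zero => simp [pow_zero, A.act_one]
  | succ n ih =>
    have : g ^ (n+1) = g * g ^ n := by rw [pow_succ']
    rw [this, A.act_mul, ih, act_wordPow_append A h1 h2, A.act_mul]

-- graph basics
variable (S : Finset G)

lemma adj_of_length_eq_of_lists {u w : List X} (h : (ssGraph A S).Adj u w) :
    w.length ≤ u.length + 1 ∧ u.length ≤ w.length + 1 := by
  obtain ⟨hne, (⟨s, hs, h | h⟩ | ⟨x, h | h⟩)⟩ := h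
  · rw [h, length_act]; omega
  · rw [h, length_act]; omega
  · subst h; simp; omega
  · subst h; simp; omega

lemma length_le_walk_length {u w : List X} (p : (ssGraph A S).Walk u w) :
    u.length ≤ w.length + p.length ∧ w.length ≤ u.length + p.length := by
  induction p with
  | nil => simp
  | @cons a b c h q ih =>
    have := adj_of_length_eq_of_lists A S h
    simp only [SimpleGraph.Walk.length_cons]
    omega

def downWalk : (u : List X) → (ssGraph A S).Walk u []
  | [] => SimpleGraph.Walk.nil
  | x :: t => SimpleGraph.Walk.cons
      (by exact ⟨by simp, Or.inr ⟨x, Or.inl rfl⟩⟩) (downWalk t)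

@[simp] lemma downWalk_length (u : List X) : (downWalk A S u).length = u.length := by
  induction u with
  | nil => rfl
  | cons x t ih => show (downWalk A S t).length + 1 = t.length + 1; rw [ih]

lemma downWalk_getVert (u : List X) (i : ℕ) :
    (downWalk A S u).getVert i = u.drop i := by
  induction u generalizing i with
  | nil => simp [downWalk, SimpleGraph.Walk.getVert]
  | cons x t ih =>
    cases i with
    | zero => simp [downWalk, SimpleGraph.Walk.getVert]
    | succ n => simpa [downWalk, SimpleGraph.Walk.getVert] using ih n

lemma dist_nil_eq (u : List X) : (ssGraph A S).dist [] u = u.length := by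
  refine le_antisymm ?_ ?_
  · have := SimpleGraph.dist_le (downWalk A S u).reverse
    simpa using this
  · have hr : (ssGraph A S).Reachable [] u := ⟨(downWalk A S u).reverse⟩
    obtain ⟨p, hp⟩ := hr.exists_walk_length_eq_dist
    have := (length_le_walk_length A S p).2
    simpa [hp] using this

lemma dist_ge_length_diff (u w : List X) (hr : (ssGraph A S).Reachable u w) :
    u.length ≤ w.length + (ssGraph A S).dist u w := by
  obtain ⟨p, hp⟩ := hr.exists_walk_length_eq_dist
  have := (length_le_walk_length A S p).1
  omega


variable [Fintype X] [DecidableEq X]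

/-- finset of potential neighbors -/
def nbrs (u : List X) : Finset (List X) :=
  (S.image fun s => A.act s u) ∪ (S.image fun s => A.act s⁻¹ u) ∪
    ((Finset.univ : Finset X).image fun x => x :: u) ∪ {u.tail}

lemma mem_nbrs_of_adj {u w : List X} (h : (ssGraph A S).Adj u w) : w ∈ nbrs A S u := by
  obtain ⟨hne, (⟨s, hs, h | h⟩ | ⟨x, h | h⟩)⟩ := h
  · -- u = act s w, so w = act s⁻¹ u
    have : w = A.act s⁻¹ u := by
      rw [h, ← A.act_mul, inv_mul_cancel, A.act_one]
    subst this
    unfold nbrs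
    refine Finset.mem_union_left _ (Finset.mem_union_left _ (Finset.mem_union_right _ ?_))
    exact Finset.mem_image_of_mem _ hs
  · subst h
    unfold nbrs
    refine Finset.mem_union_left _ (Finset.mem_union_left _ (Finset.mem_union_left _ ?_))
    exact Finset.mem_image_of_mem _ hs
  · -- u = x :: w so w = u.tail
    unfold nbrs
    refine Finset.mem_union_right _ ?_
    simp [h]
  · subst h
    unfold nbrs
    refine Finset.mem_union_left _ (Finset.mem_union_right _ ?_)
    exact Finset.mem_image_of_mem _ (Finset.mem_univ x)

lemma card_nbrs_le (u : List X) : (nbrs A S u).card ≤ 2 * S.card + Fintype.card X + 1 := by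
  classical
  have h1 := Finset.card_union_le ((S.image fun s => A.act s u) ∪ (S.image fun s => A.act s⁻¹ u) ∪
    ((Finset.univ : Finset X).image fun x => x :: u)) ({u.tail} : Finset (List X))
  have h2 := Finset.card_union_le ((S.image fun s => A.act s u) ∪ (S.image fun s => A.act s⁻¹ u))
    (((Finset.univ : Finset X)).image fun x => x :: u)
  have h3 := Finset.card_union_le (S.image fun s => A.act s u) (S.image fun s => A.act s⁻¹ u)
  have c1 := Finset.card_image_le (s := S) (f := fun s => A.act s u)
  have c2 := Finset.card_image_le (s := S) (f := fun s => A.act s⁻¹ u)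
  have c3 := Finset.card_image_le (s := (Finset.univ : Finset X)) (f := fun x => x :: u)
  simp only [Finset.card_univ] at c3
  simp only [Finset.card_singleton] at h1
  unfold nbrs
  omega

def ballF : ℕ → List X → Finset (List X)
  | 0, u => {u}
  | c + 1, u => {u} ∪ (nbrs A S u).biUnion (ballF c)

def Bnd (D : ℕ) : ℕ → ℕ
  | 0 => 1
  | c + 1 => 1 + D * Bnd D c

lemma card_ballF_le (c : ℕ) : ∀ u, (ballF A S c u).card ≤ Bnd (2 * S.card + Fintype.card X + 1) c := by
  induction c with
  | zero => intro u; simp [ballF, Bnd]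
  | succ c ih =>
    intro u
    calc (ballF A S (c+1) u).card ≤ ({u} : Finset (List X)).card + ((nbrs A S u).biUnion (ballF A S c)).card :=
          Finset.card_union_le _ _
    _ ≤ 1 + (nbrs A S u).sum fun w => (ballF A S c w).card := by
          gcongr
          · simp
          · exact Finset.card_biUnion_le
    _ ≤ 1 + (nbrs A S u).sum fun _ => Bnd (2 * S.card + Fintype.card X + 1) c := by
          gcongr with w hw
          exact ih w
    _ ≤ 1 + (2 * S.card + Fintype.card X + 1) * Bnd (2 * S.card + Fintype.card X + 1) c := by
          rw [Finset.sum_const, smul_eq_mul]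
          gcongr
          exact card_nbrs_le A S u
    _ = Bnd (2 * S.card + Fintype.card X + 1) (c + 1) := rfl

lemma mem_ballF_self (c : ℕ) (u : List X) : u ∈ ballF A S c u := by
  cases c with
  | zero => simp [ballF]
  | succ c => simp [ballF]

lemma mem_ballF_of_walk {u w : List X} (c : ℕ) (p : (ssGraph A S).Walk u w)
    (hp : p.length ≤ c) : w ∈ ballF A S c u := by
  induction c generalizing u p with
  | zero =>
    cases p with
    | nil => simp [ballF]
    | cons h q => simp at hp
  | succ c ih =>
    cases p with
    | nil => exact mem_ballF_self A S _ _
    | @cons _ b _ h q =>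
      simp only [SimpleGraph.Walk.length_cons, Nat.add_le_add_iff_right] at hp
      have hb : b ∈ nbrs A S u := mem_nbrs_of_adj A S h
      have := ih q hp
      simp only [ballF, Finset.mem_union, Finset.mem_biUnion]
      exact Or.inr ⟨b, hb, this⟩

lemma dist_gt_of_not_mem_ballF {u w : List X} (c : ℕ) (hr : (ssGraph A S).Reachable u w)
    (hw : w ∉ ballF A S c u) : c < (ssGraph A S).dist u w := by
  by_contra hle
  push_neg at hle
  obtain ⟨p, hp⟩ := hr.exists_walk_length_eq_dist
  exact hw (mem_ballF_of_walk A S c p (by omega))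


-- iterated fixed points
lemma act_pow_iter (g : G) (m : ℕ) (w : List X) (hw : A.act (g ^ m) w = w) :
    ∀ k : ℕ, A.act (g ^ (m * k)) w = w := by
  intro k
  induction k with
  | zero => simpa using A.act_one w
  | succ k ih =>
    have : g ^ (m * (k+1)) = g ^ m * g ^ (m * k) := by
      rw [← pow_add]; ring_nf
    rw [this, A.act_mul, ih, hw]

lemma exists_big_orbit
    (hfaithful : ∀ g : G, (∀ u : List X, A.act g u = u) → g = 1)
    (g : G) (hg : ∀ n : ℕ, 1 ≤ n → g ^ n ≠ 1) (B : ℕ) :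
    ∃ w : List X, ∀ n : ℕ, 1 ≤ n → n ≤ B → A.act (g ^ n) w ≠ w := by
  by_contra hc
  push_neg at hc
  have key : ∀ w : List X, A.act (g ^ (Nat.factorial B)) w = w := by
    intro w
    obtain ⟨n, hn1, hnB, hfix⟩ := hc w
    have hdvd : n ∣ Nat.factorial B := Nat.dvd_factorial hn1 hnB
    obtain ⟨k, hk⟩ := hdvd
    rw [hk]
    exact act_pow_iter A g n w hfix k
  exact hg (Nat.factorial B) (Nat.one_le_iff_ne_zero.mpr (Nat.factorial_ne_zero B))
    (hfaithful _ key)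

-- distinctness of orbit points
lemma orbit_inj (g : G) (w : List X) (B : ℕ)
    (hw : ∀ n : ℕ, 1 ≤ n → n ≤ B → A.act (g ^ n) w ≠ w) :
    ∀ i j : ℕ, i < j → j ≤ B → A.act (g ^ i) w ≠ A.act (g ^ j) w := by
  intro i j hij hjB h
  have : A.act (g ^ i) (A.act (g ^ (j - i)) w) = A.act (g ^ i) w := by
    rw [← A.act_mul, ← pow_add]
    have : i + (j - i) = j := by omega
    rw [this, h]
  have := act_injective A _ this
  exact hw (j - i) (by omega) (by omega) this

-- horizontal walks
variable (S : Finset G) (hgen : Subgroup.closure (S : Set G) = ⊤)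

include hgen in
lemma exists_horizontal_walk (h : G) :
    ∃ L : ℕ, ∀ u : List X, ∃ p : (ssGraph A S).Walk u (A.act h u),
      p.length ≤ L ∧ ∀ z ∈ p.support, z.length = u.length := by
  have hmem : h ∈ Subgroup.closure (S : Set G) := by rw [hgen]; trivial
  induction hmem using Subgroup.closure_induction with
  | mem s hs =>
    refine ⟨1, fun u => ?_⟩
    by_cases he : A.act s u = u
    · refine ⟨SimpleGraph.Walk.nil.copy rfl he.symm, by simp, ?_⟩
      intro z hz
      rw [SimpleGraph.Walk.support_copy] at hz
      simp at hz; simp [hz]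
    · refine ⟨SimpleGraph.Walk.cons ⟨Ne.symm he, Or.inl ⟨s, hs, Or.inr rfl⟩⟩ SimpleGraph.Walk.nil, le_rfl, ?_⟩
      · intro z hz
        change z ∈ [u, A.act s u] at hz
        simp at hz
        rcases hz with rfl | rfl
        · rfl
        · exact length_act A s u
  | one =>
    refine ⟨0, fun u => ?_⟩
    have he : A.act 1 u = u := A.act_one u
    refine ⟨SimpleGraph.Walk.nil.copy rfl he.symm, by simp, ?_⟩
    intro z hz
    rw [SimpleGraph.Walk.support_copy] at hz
    simp at hz; simp [hz]
  | mul a b _ _ iha ihb =>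
    obtain ⟨La, ha⟩ := iha
    obtain ⟨Lb, hb⟩ := ihb
    refine ⟨Lb + La, fun u => ?_⟩
    obtain ⟨p, hpL, hpS⟩ := hb u
    obtain ⟨q, hqL, hqS⟩ := ha (A.act b u)
    have he : A.act a (A.act b u) = A.act (a * b) u := (A.act_mul a b u).symm
    refine ⟨p.append (q.copy rfl he), ?_, ?_⟩
    · rw [SimpleGraph.Walk.length_append, SimpleGraph.Walk.length_copy]
      omega
    · intro z hz
      rw [SimpleGraph.Walk.mem_support_append_iff] at hz
      rcases hz with hz | hz
      · exact hpS z hz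
      · rw [SimpleGraph.Walk.support_copy] at hz
        rw [hqS z hz, length_act]
  | inv a _ iha =>
    obtain ⟨La, ha⟩ := iha
    refine ⟨La, fun u => ?_⟩
    obtain ⟨p, hpL, hpS⟩ := ha (A.act a⁻¹ u)
    have he : A.act a (A.act a⁻¹ u) = u := by rw [← A.act_mul, mul_inv_cancel, A.act_one]
    refine ⟨(p.reverse.copy he rfl), ?_, ?_⟩
    · rw [SimpleGraph.Walk.length_copy, SimpleGraph.Walk.length_reverse]; exact hpL
    · intro z hz
      rw [SimpleGraph.Walk.support_copy, SimpleGraph.Walk.support_reverse, List.mem_reverse] at hz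
      rw [hpS z hz, length_act]

include hgen in
lemma exists_horizontal_walk_pow (hgroup : G) (L : ℕ)
    (hL : ∀ u : List X, ∃ p : (ssGraph A S).Walk u (A.act hgroup u),
      p.length ≤ L ∧ ∀ z ∈ p.support, z.length = u.length)
    (n : ℕ) :
    ∀ u : List X, ∃ p : (ssGraph A S).Walk u (A.act (hgroup ^ n) u),
      p.length ≤ n * L ∧ ∀ z ∈ p.support, z.length = u.length := by
  induction n with
  | zero =>
    intro u
    have he : A.act (hgroup ^ 0) u = u := by rw [pow_zero, A.act_one]
    refine ⟨SimpleGraph.Walk.nil.copy rfl he.symm, by simp, ?_⟩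
    intro z hz
    rw [SimpleGraph.Walk.support_copy] at hz
    simp at hz; simp [hz]
  | succ n ih =>
    intro u
    obtain ⟨p, hpL, hpS⟩ := ih u
    obtain ⟨q, hqL, hqS⟩ := hL (A.act (hgroup ^ n) u)
    have he : A.act hgroup (A.act (hgroup ^ n) u) = A.act (hgroup ^ (n+1)) u := by
      rw [← A.act_mul, ← pow_succ']
    refine ⟨p.append (q.copy rfl he), ?_, ?_⟩
    · rw [SimpleGraph.Walk.length_append, SimpleGraph.Walk.length_copy]
      have hn : n * L + L ≤ (n+1) * L := by ring_nf; omega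
      omega
    · intro z hz
      rw [SimpleGraph.Walk.mem_support_append_iff] at hz
      rcases hz with hz | hz
      · exact hpS z hz
      · rw [SimpleGraph.Walk.support_copy] at hz
        rw [hqS z hz, length_act]


theorem no_divergence
    (hfaithful : ∀ g : G, (∀ u : List X, A.act g u = u) → g = 1)
    (hgen : Subgroup.closure (S : Set G) = ⊤)
    (g : G) (hg : ∀ n : ℕ, 1 ≤ n → g ^ n ≠ 1)
    (v : List X) (hv : v ≠ []) (h1 : A.res g v = g) (h2 : A.act g v = v) :
    ¬ ∃ e : ℕ → ℝ, StrictMono e ∧ (∀ C : ℝ, ∃ n : ℕ, C < e n) ∧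
        IsDivergenceFunction (ssGraph A S) e := by
  classical
  rintro ⟨e, hmono, hunb, hdiv⟩
  have hvlen : 1 ≤ v.length := by
    cases v with
    | nil => exact absurd rfl hv
    | cons a t => simp
  obtain ⟨c, hc⟩ := exists_nat_ge (e 0)
  set B := Bnd (2 * S.card + Fintype.card X + 1) c with hB
  obtain ⟨w, hw⟩ := exists_big_orbit A hfaithful g hg B
  -- find a far orbit point
  have hfarn : ∃ n : ℕ, 1 ≤ n ∧ n ≤ B ∧ A.act (g ^ n) w ∉ ballF A S c w := by
    by_contra hcon
    push_neg at hcon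
    have hmap : ∀ i ∈ Finset.range (B + 1), A.act (g ^ i) w ∈ ballF A S c w := by
      intro i hi
      rw [Finset.mem_range] at hi
      rcases Nat.eq_zero_or_pos i with h0 | h0
      · subst h0
        rw [pow_zero, A.act_one]
        exact mem_ballF_self A S c w
      · exact hcon i h0 (by omega)
    have hinj : Set.InjOn (fun i : ℕ => A.act (g ^ i) w) (Finset.range (B + 1)) := by
      intro i hi j hj hij
      simp only [Finset.coe_range, Set.mem_Iio] at hi hj
      rcases lt_trichotomy i j with hlt | heq | hlt
      · exact absurd hij (orbit_inj A g w B hw i j hlt (by omega))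
      · exact heq
      · exact absurd hij.symm (orbit_inj A g w B hw j i hlt (by omega))
    have hcard := Finset.card_le_card_of_injOn _ hmap hinj
    rw [Finset.card_range] at hcard
    have := card_ballF_le A S c w
    omega
  obtain ⟨n, hn1, hnB, hnot⟩ := hfarn
  have hreach : (ssGraph A S).Reachable w (A.act (g ^ n) w) :=
    (downWalk A S w).reachable.trans (downWalk A S (A.act (g ^ n) w)).reachable.symm
  have hfar : c < (ssGraph A S).dist w (A.act (g ^ n) w) :=
    dist_gt_of_not_mem_ballF A S c hreach hnot
  have hfarR : e 0 < ((ssGraph A S).dist w (A.act (g ^ n) w) : ℝ) := by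
    have : (c : ℝ) < ((ssGraph A S).dist w (A.act (g ^ n) w) : ℝ) := by exact_mod_cast hfar
    linarith
  -- horizontal walks
  obtain ⟨L1, hL1⟩ := exists_horizontal_walk A S hgen g
  obtain ⟨m, hm⟩ := hunb ((B * L1 : ℕ) : ℝ)
  -- set up the two geodesics
  have hlenpa : (wordPow v (m + 1) ++ w).length = (m + 1) * v.length + w.length := by
    rw [List.length_append, wordPow_length]
  have hlenpb : (wordPow v (m + 1) ++ A.act (g ^ n) w).length
      = (m + 1) * v.length + w.length := by
    rw [List.length_append, wordPow_length, length_act]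
  have hα : ((downWalk A S (wordPow v (m + 1) ++ w)).reverse).length =
      (ssGraph A S).dist [] (wordPow v (m + 1) ++ w) := by
    rw [SimpleGraph.Walk.length_reverse, downWalk_length, dist_nil_eq]
  have hβ : ((downWalk A S (wordPow v (m + 1) ++ A.act (g ^ n) w)).reverse).length =
      (ssGraph A S).dist [] (wordPow v (m + 1) ++ A.act (g ^ n) w) := by
    rw [SimpleGraph.Walk.length_reverse, downWalk_length, dist_nil_eq]
  -- getVert computations
  have hgetα : ∀ t : ℕ, t ≤ (m + 1) * v.length + w.length →
      ((downWalk A S (wordPow v (m + 1) ++ w)).reverse).getVert t =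
      (wordPow v (m + 1) ++ w).drop ((m + 1) * v.length + w.length - t) := by
    intro t ht
    rw [SimpleGraph.Walk.getVert_reverse, downWalk_getVert, downWalk_length, hlenpa]
  have hgetβ : ∀ t : ℕ, t ≤ (m + 1) * v.length + w.length →
      ((downWalk A S (wordPow v (m + 1) ++ A.act (g ^ n) w)).reverse).getVert t =
      (wordPow v (m + 1) ++ A.act (g ^ n) w).drop ((m + 1) * v.length + w.length - t) := by
    intro t ht
    rw [SimpleGraph.Walk.getVert_reverse, downWalk_getVert, downWalk_length, hlenpb]
  set R := w.length with hR
  set r := m * v.length with hr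
  have hdropw : (wordPow v (m + 1) ++ w).drop ((m + 1) * v.length + w.length - R) = w := by
    rw [hR, show (m + 1) * v.length + w.length - w.length = (m + 1) * v.length by omega]
    rw [← wordPow_length v (m + 1), List.drop_left]
  have hdropw' : (wordPow v (m + 1) ++ A.act (g ^ n) w).drop
      ((m + 1) * v.length + w.length - R) = A.act (g ^ n) w := by
    rw [hR, show (m + 1) * v.length + w.length - w.length = (m + 1) * v.length by omega]
    rw [← wordPow_length v (m + 1), List.drop_left]
  have hdropa : (wordPow v (m + 1) ++ w).drop ((m + 1) * v.length + w.length - (R + r)) =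
      wordPow v m ++ w := by
    have hs : (m + 1) * v.length + w.length - (R + r) = v.length := by
      rw [hR, hr]; ring_nf; omega
    rw [hs, wordPow_succ, List.append_assoc, List.drop_left]
  have hdropb : (wordPow v (m + 1) ++ A.act (g ^ n) w).drop
      ((m + 1) * v.length + w.length - (R + r)) = wordPow v m ++ A.act (g ^ n) w := by
    have hs : (m + 1) * v.length + w.length - (R + r) = v.length := by
      rw [hR, hr]; ring_nf; omega
    rw [hs, wordPow_succ, List.append_assoc, List.drop_left]
  have hRr : R + r < (m + 1) * v.length + w.length := by
    rw [hR, hr]; ring_nf; omega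
  -- the horizontal path
  obtain ⟨p0, hp0len, hp0supp⟩ :=
    exists_horizontal_walk_pow A S hgen g L1 hL1 n (wordPow v m ++ w)
  have hend : A.act (g ^ n) (wordPow v m ++ w) = wordPow v m ++ A.act (g ^ n) w :=
    act_pow_wordPow_append A h1 h2 n m w
  have heq1 : ((downWalk A S (wordPow v (m + 1) ++ w)).reverse).getVert (R + r) =
      wordPow v m ++ w := by
    rw [hgetα (R + r) (by omega), hdropa]
  have heq2 : ((downWalk A S (wordPow v (m + 1) ++ A.act (g ^ n) w)).reverse).getVert (R + r) =
      wordPow v m ++ A.act (g ^ n) w := by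
    rw [hgetβ (R + r) (by omega), hdropb]
  have hp : ∃ p : (ssGraph A S).Walk
      (((downWalk A S (wordPow v (m + 1) ++ w)).reverse).getVert (R + r))
      (((downWalk A S (wordPow v (m + 1) ++ A.act (g ^ n) w)).reverse).getVert (R + r)),
      p.length ≤ n * L1 ∧ ∀ z ∈ p.support, z.length = R + r := by
    refine ⟨(p0.copy rfl hend).copy heq1.symm heq2.symm, ?_, ?_⟩
    · rw [SimpleGraph.Walk.length_copy, SimpleGraph.Walk.length_copy]
      exact hp0len
    · intro z hz
      rw [SimpleGraph.Walk.support_copy, SimpleGraph.Walk.support_copy] at hz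
      rw [hp0supp z hz, List.length_append, wordPow_length, hR, hr]
      omega
  obtain ⟨p, hplen, hpsupp⟩ := hp
  -- apply the divergence property
  have happ := hdiv [] (wordPow v (m + 1) ++ w) (wordPow v (m + 1) ++ A.act (g ^ n) w)
    R r (downWalk A S (wordPow v (m + 1) ++ w)).reverse
    (downWalk A S (wordPow v (m + 1) ++ A.act (g ^ n) w)).reverse
    hα hβ
    (by rw [SimpleGraph.Walk.length_reverse, downWalk_length, hlenpa]; exact hRr)
    (by rw [SimpleGraph.Walk.length_reverse, downWalk_length, hlenpb]; exact hRr)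
    (by
      rw [hgetα R (by omega), hgetβ R (by omega), hdropw, hdropw']
      exact hfarR)
    p
    (by
      intro z hz
      rw [dist_nil_eq, hpsupp z hz])
  -- contradiction
  have hc1 : (p.length : ℝ) ≤ ((n * L1 : ℕ) : ℝ) := by exact_mod_cast hplen
  have hc2 : ((n * L1 : ℕ) : ℝ) ≤ ((B * L1 : ℕ) : ℝ) := by
    have : n * L1 ≤ B * L1 := Nat.mul_le_mul_right L1 hnB
    exact_mod_cast this
  have hc3 : e m ≤ e r := by
    apply hmono.monotone
    rw [hr]
    calc m = m * 1 := (mul_one m).symm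
    _ ≤ m * v.length := Nat.mul_le_mul_left m hvlen
  linarith


end SelfSim

/-- If a self-similar group `G` with finite generating set `S` acts faithfully on
`X*` for a finite alphabet `X`, and there are `g ∈ G` of infinite order and a
nonempty word `v` with `g|_v = g` and `g(v) = v`, then the self-similarity graph
admits no increasing unbounded divergence function; in particular it is not Gromov
hyperbolic. -/
theorem ssGraph_not_hyperbolic {G X : Type*} [Group G] [Fintype X]
    (A : SelfSimilarAction G X)
    (hfaithful : ∀ g : G, (∀ u : List X, A.act g u = u) → g = 1)
    (S : Finset G) (hgen : Subgroup.closure (S : Set G) = ⊤)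
    (g : G) (hg : ∀ n : ℕ, 1 ≤ n → g ^ n ≠ 1)
    (v : List X) (hv : v ≠ []) (h1 : A.res g v = g) (h2 : A.act g v = v) :
    (¬ ∃ e : ℕ → ℝ, StrictMono e ∧ (∀ C : ℝ, ∃ n : ℕ, C < e n) ∧
        IsDivergenceFunction (ssGraph A S) e) ∧
    ¬ IsGromovHyperbolic (ssGraph A S) := by
  classical
  have hnd := no_divergence A S hfaithful hgen g hg v hv h1 h2
  exact ⟨hnd, fun hhyp => hnd (divergence_of_hyperbolic hhyp)⟩

end Stmt19
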